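/- Let (R,m) be a 1-dimensional Cohen–Macaulay Noetherian local ring, I an m-primary ideal of R, and x ∈ I an element with I^{n+1} = x I^n for some n ≥ 1 (a principal reduction of I). Then Im = xm if and only if Im ⊆ xR. (In the paper's terminology: the maximal ideal m is an I-Ulrich module if and only if m ⊆ ((x) : I).) -/

import Mathlib

open IsLocalRing

/-- Let `(R,𝔪)` be a `1`-dimensional Cohen–Macaulay Noetherian local ring, `I` an
`𝔪`-primary ideal and `x ∈ I` a principal reduction of `I` (`I^{n+1} = xI^n` for some
`n ≥ 1`).  Then `I𝔪 = x𝔪` iff `I𝔪 ⊆ xR`; that is, `𝔪` is an `I`-Ulrich module iff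
`𝔪 ⊆ ((x) : I)`. -/
theorem stmt18 (R : Type) [CommRing R] [IsLocalRing R] [IsNoetherianRing R]
    (hdim : ringKrullDim R = 1) (hCM : ∃ y ∈ maximalIdeal R, IsSMulRegular R y)
    (I : Ideal R) (hIle : I ≤ maximalIdeal R) (hprim : ∃ k : ℕ, maximalIdeal R ^ k ≤ I)
    (x : R) (hx : x ∈ I)
    (hred : ∃ n : ℕ, 1 ≤ n ∧ I ^ (n + 1) = Ideal.span {x} * I ^ n) :
    I * maximalIdeal R = Ideal.span {x} * maximalIdeal R ↔
      I * maximalIdeal R ≤ Ideal.span {x} := by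
  obtain ⟨n, hn1, hn⟩ := hred
  obtain ⟨k, hk⟩ := hprim
  obtain ⟨y, hym, hyreg⟩ := hCM
  -- key: x ∉ I * m
  have hxnot : x ∉ I * maximalIdeal R := by
    intro hmem
    have hspan : Ideal.span {x} ≤ I * maximalIdeal R := by
      rwa [Ideal.span_le, Set.singleton_subset_iff]
    have h1 : I ^ (n + 1) ≤ maximalIdeal R • I ^ (n + 1) := by
      calc I ^ (n + 1) = Ideal.span {x} * I ^ n := hn
        _ ≤ (I * maximalIdeal R) * I ^ n := Ideal.mul_mono_left hspan
        _ = maximalIdeal R * I ^ (n + 1) := by ring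
        _ = maximalIdeal R • I ^ (n + 1) := rfl
    have hbot : I ^ (n + 1) = ⊥ := by
      refine Submodule.eq_bot_of_le_smul_of_le_jacobson_bot (maximalIdeal R) _
        (IsNoetherian.noetherian _) h1 ?_
      exact (IsLocalRing.jacobson_eq_maximalIdeal ⊥ bot_ne_top).ge
    have hmz : maximalIdeal R ^ (k * (n + 1)) = ⊥ := by
      have : maximalIdeal R ^ (k * (n + 1)) = (maximalIdeal R ^ k) ^ (n + 1) := by
        rw [pow_mul]
      rw [this]
      exact le_bot_iff.mp (hbot ▸ Ideal.pow_right_mono hk (n+1))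
    have hy0 : y ^ (k * (n + 1)) = 0 := by
      have := Ideal.pow_mem_pow hym (k * (n + 1))
      rwa [hmz, Ideal.mem_bot] at this
    have hreg : IsSMulRegular R (y ^ (k * (n + 1))) := hyreg.pow _
    rw [hy0] at hreg
    have : (0 : R) * 1 = 0 * 0 := by ring
    have h01 : (1 : R) = 0 := hreg this
    exact one_ne_zero h01
  constructor
  · intro h
    rw [h]
    exact Ideal.mul_le_left
  · intro h
    apply le_antisymm
    · -- I * m ≤ span{x} * m
      rw [Ideal.mul_le]
      intro a ha b hb
      have hab : a * b ∈ Ideal.span {x} := h (Ideal.mul_mem_mul ha hb)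
      obtain ⟨r, hr⟩ := Ideal.mem_span_singleton'.mp hab
      by_cases hrm : r ∈ maximalIdeal R
      · rw [← hr, mul_comm r x]
        exact Ideal.mul_mem_mul (Ideal.mem_span_singleton_self x) hrm
      · exfalso
        have hru : IsUnit r := by
          by_contra hnu
          exact hrm (hnu)
        obtain ⟨u, hu⟩ := hru
        have hxmem : x ∈ I * maximalIdeal R := by
          have : x = ↑u⁻¹ * (a * b) := by
            rw [← hr, ← hu, ← mul_assoc, Units.inv_mul, one_mul]
          rw [this]
          exact Ideal.mul_mem_left _ _ (Ideal.mul_mem_mul ha hb)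
        exact hxnot hxmem
    · exact Ideal.mul_mono (Ideal.span_le.mpr (Set.singleton_subset_iff.mpr hx)) le_rfl
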